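/- arXiv:1912.07081 — 4 statements merged into one kernel-verified Lean document; each statement's English description precedes it below -/
import Mathlib

section
/- Let g ≥ 1 and N ≥ 2 be integers. Then the set of g × g real matrices of determinant 1 all of whose entries lie in ℤ[1/N] is dense in the set of all g × g real matrices of determinant 1 (with the topology induced from the space of g × g real matrices). -/
open Matrix

/-- The set ℤ[1/N] as a subring of ℝ. -/
def ZinvN (N : ℕ) (hN : 2 ≤ N) : Subring ℝ where
  carrier := {x : ℝ | ∃ (m : ℤ) (k : ℕ), x = (m : ℝ) / (N : ℝ) ^ k}
  zero_mem' := ⟨0, 0, by simp⟩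
  one_mem' := ⟨1, 0, by simp⟩
  add_mem' := by
    rintro a b ⟨m, k, rfl⟩ ⟨m', k', rfl⟩
    have hN0 : (N : ℝ) ≠ 0 := by
      have : 0 < N := by omega
      positivity
    refine ⟨m * (N:ℤ) ^ k' + m' * (N:ℤ) ^ k, k + k', ?_⟩
    rw [div_add_div _ _ (pow_ne_zero k hN0) (pow_ne_zero k' hN0), ← pow_add]
    push_cast
    ring
  mul_mem' := by
    rintro a b ⟨m, k, rfl⟩ ⟨m', k', rfl⟩
    refine ⟨m * m', k + k', ?_⟩
    rw [div_mul_div_comm, ← pow_add]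
    push_cast
    ring
  neg_mem' := by
    rintro a ⟨m, k, rfl⟩
    exact ⟨-m, k, by push_cast; ring⟩

lemma mem_ZinvN {N : ℕ} {hN : 2 ≤ N} {x : ℝ} :
    x ∈ ZinvN N hN ↔ ∃ (m : ℤ) (k : ℕ), x = (m : ℝ) / (N : ℝ) ^ k := Iff.rfl

lemma ZinvN_dense (N : ℕ) (hN : 2 ≤ N) : Dense (ZinvN N hN : Set ℝ) := by
  intro x
  rw [Metric.mem_closure_iff]
  intro ε hε
  have hN1 : (1 : ℝ) < N := by exact_mod_cast hN.trans_lt' one_lt_two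
  obtain ⟨k, hk⟩ := pow_unbounded_of_one_lt ε⁻¹ hN1
  have hNk : (0:ℝ) < (N:ℝ) ^ k := by positivity
  set y : ℝ := (⌊x * (N:ℝ)^k⌋ : ℝ) with hy
  refine ⟨y / (N:ℝ)^k, ⟨⌊x * (N:ℝ)^k⌋, k, rfl⟩, ?_⟩
  have h1 : y ≤ x * (N:ℝ)^k := Int.floor_le _
  have h2 : x * (N:ℝ)^k < y + 1 := Int.lt_floor_add_one _
  have hle : y / (N:ℝ)^k ≤ x := by rw [div_le_iff₀ hNk]; exact h1
  have hx : x < y/(N:ℝ)^k + 1/(N:ℝ)^k := by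
    rw [← add_div, lt_div_iff₀ hNk]; linarith
  have h1k : 1/(N:ℝ)^k < ε := by
    rw [div_lt_iff₀ hNk]
    have h3 := mul_lt_mul_of_pos_left hk hε
    rw [mul_inv_cancel₀ (ne_of_gt hε)] at h3
    linarith
  rw [Real.dist_eq, abs_of_nonneg (by linarith)]
  linarith

set_option maxHeartbeats 1000000 in
/-- The key matrix identity: `diag(…,a,…,a⁻¹,…)` is a product of six transvections. -/
lemma transvection_prod_eq_diagonal {n : Type*} [DecidableEq n] [Fintype n] (i j : n)
    (hij : i ≠ j) (a : ℝ) (ha : a ≠ 0) :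
    transvection i j a * transvection j i (-a⁻¹) * transvection i j a *
      transvection i j (-1) * transvection j i 1 * transvection i j (-1) =
      diagonal (Function.update (Function.update (fun _ => (1:ℝ)) i a) j a⁻¹) := by
  simp only [transvection, add_mul, mul_add, one_mul, mul_one,
    single_mul_single_same, single_mul_single_of_ne, hij, hij.symm, ne_eq,
    not_false_iff, add_zero, zero_add, zero_mul, mul_zero]
  ext r s
  by_cases hri : r = i <;> by_cases hrj : r = j <;> by_cases hsi : s = i <;> by_cases hsj : s = j <;>
    subst_vars <;>
    simp_all [Matrix.add_apply, Matrix.one_apply, single_apply, Matrix.diagonal_apply,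
      Function.update_apply, hij, hij.symm] <;>
    split_ifs <;> simp_all

lemma continuous_transvection {n : Type*} [DecidableEq n] [Fintype n] (i j : n) :
    Continuous fun c : ℝ => transvection i j c := by
  apply continuous_matrix
  intro r s
  simp only [transvection, Matrix.add_apply, Matrix.one_apply, single_apply, of_apply]
  by_cases h : i = r ∧ j = s
  · simp only [h, and_self, if_true]
    exact continuous_const.add continuous_id
  · simp only [if_neg h, add_zero]
    exact continuous_const

/-- Any diagonal matrix of determinant one lies in a submonoid containing all the special
diagonal matrices `diag(…,a,…,a⁻¹,…)`. -/
lemma diagonal_mem_of_prod_one {g : ℕ} (M : Submonoid (Matrix (Fin g) (Fin g) ℝ))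
    (hM : ∀ (i j : Fin g), i ≠ j → ∀ a : ℝ, a ≠ 0 →
      diagonal (Function.update (Function.update (fun _ => (1:ℝ)) i a) j a⁻¹) ∈ M) :
    ∀ (s : Finset (Fin g)) (d : Fin g → ℝ), (∀ i, d i ≠ 1 → i ∈ s) → ∏ i, d i = 1 →
      diagonal d ∈ M := by
  intro s
  induction s using Finset.strongInduction with
  | _ s ih =>
    intro d hsupp hprod
    by_cases hall : ∀ i, d i = 1
    · have hd : d = fun _ => 1 := funext hall
      rw [hd, diagonal_one]
      exact M.one_mem
    · push_neg at hall
      obtain ⟨i, hi⟩ := hall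
      have hj : ∃ j, j ≠ i ∧ d j ≠ 1 := by
        by_contra h
        push_neg at h
        have he : ∏ k, d k = d i :=
          Finset.prod_eq_single i (fun b _ hb => h b hb) (by simp)
        rw [hprod] at he
        exact hi he.symm
      obtain ⟨j, hji, hj1⟩ := hj
      have hdi0 : d i ≠ 0 := by
        intro h0
        have : ∏ k, d k = 0 := Finset.prod_eq_zero (Finset.mem_univ i) h0
        rw [hprod] at this
        norm_num at this
      set d' : Fin g → ℝ := Function.update (Function.update d i 1) j (d j * d i) with hd'
      have key : diagonal d =
          diagonal (Function.update (Function.update (fun _ => (1:ℝ)) i (d i)) j (d i)⁻¹) *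
            diagonal d' := by
        rw [diagonal_mul_diagonal, diagonal_eq_diagonal_iff]
        intro k
        rcases eq_or_ne k j with rfl | hkj
        · simp only [hd', Pi.mul_apply, Function.update_apply, if_pos rfl, if_true]
          field_simp
        · rcases eq_or_ne k i with rfl | hki
          · simp [hd', Function.update_apply, hkj, hji.symm]
          · simp [hd', Function.update_apply, hkj, hki]
      have hDprod : ∏ k, (Function.update (Function.update (fun _ => (1:ℝ)) i (d i)) j
          (d i)⁻¹) k = 1 := by
        rw [Finset.prod_update_of_mem (Finset.mem_univ j),
          Finset.prod_update_of_mem (Finset.mem_sdiff.mpr ⟨Finset.mem_univ i,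
            by simp [hji.symm]⟩)]
        simp [hdi0]
      have hprod' : ∏ k, d' k = 1 := by
        have hdet := congrArg det key
        rw [det_mul, det_diagonal, det_diagonal, det_diagonal, hprod, hDprod, one_mul] at hdet
        exact hdet.symm
      have hsupp' : ∀ k, d' k ≠ 1 → k ∈ s.erase i := by
        intro k hk
        rcases eq_or_ne k i with rfl | hki
        · exfalso
          apply hk
          simp [hd', Function.update_apply, hji.symm]
        · rcases eq_or_ne k j with hkj | hkj
          · rw [hkj]
            exact Finset.mem_erase.mpr ⟨hji, hsupp j hj1⟩
          · refine Finset.mem_erase.mpr ⟨hki, hsupp k ?_⟩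
            simpa [hd', Function.update_apply, hki, hkj] using hk
      have hsub : s.erase i ⊂ s := Finset.erase_ssubset (hsupp i hi)
      have hmem' := ih (s.erase i) hsub d' hsupp' hprod'
      rw [key]
      exact M.mul_mem (hM i j hji.symm (d i) hdi0) hmem'

/-- `SL_g(ℤ[1/N])` is dense in `SL_g(ℝ)`. -/
theorem slZinvN_dense_in_slR (g N : ℕ) (hg : 1 ≤ g) (hN : 2 ≤ N) :
    {A : Matrix (Fin g) (Fin g) ℝ | A.det = 1} ⊆
      closure {A : Matrix (Fin g) (Fin g) ℝ | A.det = 1 ∧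
        ∀ i j, ∃ (m : ℤ) (k : ℕ), A i j = (m : ℝ) / (N : ℝ) ^ k} := by
  set T : Set (Matrix (Fin g) (Fin g) ℝ) := {A | A.det = 1 ∧
    ∀ i j, ∃ (m : ℤ) (k : ℕ), A i j = (m : ℝ) / (N : ℝ) ^ k} with hT
  set R : Subring ℝ := ZinvN N hN with hR
  -- the generating set: transvections with coefficients in ℤ[1/N]
  set Gen : Set (Matrix (Fin g) (Fin g) ℝ) :=
    {X | ∃ (i j : Fin g), i ≠ j ∧ ∃ c ∈ R, X = transvection i j c} with hGen
  set S : Submonoid (Matrix (Fin g) (Fin g) ℝ) := Submonoid.closure Gen with hS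
  -- S is contained in the target set T
  have hST : (S : Set (Matrix (Fin g) (Fin g) ℝ)) ⊆ T := by
    intro x hx
    induction hx using Submonoid.closure_induction with
    | mem X hX =>
      obtain ⟨i, j, hij, c, hc, rfl⟩ := hX
      constructor
      · exact det_transvection_of_ne i j hij c
      · intro r s
        have : transvection i j c r s ∈ R := by
          simp only [transvection, Matrix.add_apply, Matrix.one_apply, single_apply, of_apply]
          split_ifs
          · exact R.add_mem R.one_mem hc
          · exact R.add_mem R.one_mem R.zero_mem
          · exact R.add_mem R.zero_mem hc
          · exact R.add_mem R.zero_mem R.zero_mem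
        exact this
    | one =>
      refine ⟨det_one, fun r s => ?_⟩
      have : (1 : Matrix (Fin g) (Fin g) ℝ) r s ∈ R := by
        simp only [Matrix.one_apply]
        split_ifs
        · exact R.one_mem
        · exact R.zero_mem
      exact this
    | mul x y _ _ hx hy =>
      refine ⟨by rw [det_mul, hx.1, hy.1, one_mul], fun r s => ?_⟩
      have : (x * y) r s ∈ R := by
        rw [Matrix.mul_apply]
        exact R.sum_mem fun k _ => R.mul_mem (hx.2 r k) (hy.2 k r |> fun _ => hy.2 k s)
      exact this
  -- the topological closure of S
  set C : Submonoid (Matrix (Fin g) (Fin g) ℝ) := S.topologicalClosure with hC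
  have hCclosure : (C : Set (Matrix (Fin g) (Fin g) ℝ)) = closure (S : Set _) := rfl
  -- all real transvections lie in C
  have htrans : ∀ (i j : Fin g), i ≠ j → ∀ c : ℝ, transvection i j c ∈ C := by
    intro i j hij c
    have hc : c ∈ closure (R : Set ℝ) := ZinvN_dense N hN c
    have hmaps : Set.MapsTo (fun c : ℝ => transvection i j c) (R : Set ℝ)
        (S : Set (Matrix (Fin g) (Fin g) ℝ)) :=
      fun q hq => Submonoid.subset_closure ⟨i, j, hij, q, hq, rfl⟩
    exact map_mem_closure (continuous_transvection i j) hc hmaps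
  -- the special diagonal matrices lie in C
  have hdiag2 : ∀ (i j : Fin g), i ≠ j → ∀ a : ℝ, a ≠ 0 →
      diagonal (Function.update (Function.update (fun _ => (1:ℝ)) i a) j a⁻¹) ∈ C := by
    intro i j hij a ha
    rw [← transvection_prod_eq_diagonal i j hij a ha]
    exact C.mul_mem (C.mul_mem (C.mul_mem (C.mul_mem (C.mul_mem
      (htrans i j hij a) (htrans j i hij.symm (-a⁻¹))) (htrans i j hij a))
      (htrans i j hij (-1))) (htrans j i hij.symm 1)) (htrans i j hij (-1))
  -- all diagonal matrices of determinant one lie in C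
  have hdiag : ∀ d : Fin g → ℝ, ∏ i, d i = 1 → diagonal d ∈ C := fun d hd =>
    diagonal_mem_of_prod_one C hdiag2 Finset.univ d (fun i _ => Finset.mem_univ i) hd
  -- now the main argument
  intro A hA
  obtain ⟨L, L', D, hALD⟩ := Pivot.exists_list_transvec_mul_diagonal_mul_list_transvec A
  have hdetD : ∏ i, D i = 1 := by
    have : A.det = 1 := hA
    rw [hALD, det_mul, det_mul, TransvectionStruct.det_toMatrix_prod,
      TransvectionStruct.det_toMatrix_prod, det_diagonal, one_mul, mul_one] at this
    exact this
  have hLC : ∀ (LL : List (TransvectionStruct (Fin g) ℝ)),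
      (LL.map TransvectionStruct.toMatrix).prod ∈ C := by
    intro LL
    apply Submonoid.list_prod_mem
    intro x hx
    obtain ⟨t, _, rfl⟩ := List.mem_map.mp hx
    exact htrans t.i t.j t.hij t.c
  have hAC : A ∈ C := by
    rw [hALD]
    exact C.mul_mem (C.mul_mem (hLC L) (hdiag D hdetD)) (hLC L')
  have : A ∈ closure (S : Set (Matrix (Fin g) (Fin g) ℝ)) := hAC
  exact closure_mono hST this
end

section
/- Let g ≥ 1 and N ≥ 2 be integers. Then the set of g × g real matrices of the form r • (G * Gᵀ), where r is a positive real number and G is a g × g real matrix with determinant 1 all of whose entries lie in ℤ[1/N], is dense in the set of g × g real matrices that are symmetric and positive definite (with the topology induced from the space of g × g real matrices). -/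
open Matrix

section Aux

variable (N : ℕ)

/-- ℤ[1/N] as a subring of ℝ. -/
def zInvN (hN : 2 ≤ N) : Subring ℝ where
  carrier := {x : ℝ | ∃ (m : ℤ) (k : ℕ), x = (m : ℝ) / (N : ℝ) ^ k}
  zero_mem' := ⟨0, 0, by simp⟩
  one_mem' := ⟨1, 0, by simp⟩
  add_mem' := by
    rintro a b ⟨m, k, rfl⟩ ⟨m', k', rfl⟩
    have hN0 : (N : ℝ) ≠ 0 := by positivity
    have h1 : ((N:ℝ)) ^ k ≠ 0 := by positivity
    have h2 : ((N:ℝ)) ^ k' ≠ 0 := by positivity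
    refine ⟨m * N ^ k' + N ^ k * m', k + k', ?_⟩
    rw [div_add_div _ _ h1 h2, ← pow_add]
    push_cast
    ring_nf
  mul_mem' := by
    rintro a b ⟨m, k, rfl⟩ ⟨m', k', rfl⟩
    have hN0 : (N : ℝ) ≠ 0 := by positivity
    refine ⟨m * m', k + k', ?_⟩
    rw [div_mul_div_comm, ← pow_add]
    push_cast
    ring_nf
  neg_mem' := by
    rintro a ⟨m, k, rfl⟩
    exact ⟨-m, k, by push_cast; ring⟩

lemma dense_zInvN (hN : 2 ≤ N) (x : ℝ) :
    x ∈ closure {x : ℝ | ∃ (m : ℤ) (k : ℕ), x = (m : ℝ) / (N : ℝ) ^ k} := by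
  have hN1 : (1 : ℝ) < (N : ℝ) := by exact_mod_cast hN.trans_lt' one_lt_two
  rw [Metric.mem_closure_iff]
  intro ε hε
  obtain ⟨k, hk⟩ := exists_pow_lt_of_lt_one hε (by
    rw [one_div]; exact inv_lt_one_of_one_lt₀ hN1 : (1 : ℝ) / N < 1)
  have hNk : (0:ℝ) < (N:ℝ) ^ k := by positivity
  refine ⟨(⌊x * N ^ k⌋ : ℝ) / (N:ℝ) ^ k, ⟨⌊x * N ^ k⌋, k, rfl⟩, ?_⟩
  have h1 : (⌊x * N ^ k⌋ : ℝ) ≤ x * N ^ k := Int.floor_le _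
  have h2 : x * N ^ k < ⌊x * N ^ k⌋ + 1 := Int.lt_floor_add_one _
  rw [Real.dist_eq, abs_of_nonneg (by rw [sub_nonneg, div_le_iff₀ hNk]; linarith)]
  calc x - (⌊x * N ^ k⌋ : ℝ) / (N:ℝ) ^ k < 1 / N ^ k := by
        rw [sub_lt_iff_lt_add, ← add_div, lt_div_iff₀ hNk]; linarith
    _ ≤ (1/N) ^ k := by rw [div_pow, one_pow]
    _ < ε := hk

end Aux

section SL

variable {g N : ℕ}

/-- SL_g(ℤ[1/N]) as a set of real matrices. -/
def slSet (g N : ℕ) : Set (Matrix (Fin g) (Fin g) ℝ) :=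
  {G | G.det = 1 ∧ ∀ i j, ∃ (m : ℤ) (k : ℕ), G i j = (m : ℝ) / (N : ℝ) ^ k}

lemma one_mem_slSet (hN : 2 ≤ N) : (1 : Matrix (Fin g) (Fin g) ℝ) ∈ slSet g N := by
  refine ⟨det_one, fun i j => ?_⟩
  by_cases h : i = j
  · exact ⟨1, 0, by simp [h, Matrix.one_apply]⟩
  · exact ⟨0, 0, by simp [Matrix.one_apply, h]⟩

lemma mul_mem_slSet (hN : 2 ≤ N) {A B : Matrix (Fin g) (Fin g) ℝ}
    (hA : A ∈ slSet g N) (hB : B ∈ slSet g N) : A * B ∈ slSet g N := by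
  refine ⟨by rw [det_mul, hA.1, hB.1, one_mul], fun i j => ?_⟩
  have : (A * B) i j ∈ zInvN N hN := by
    rw [Matrix.mul_apply]
    exact Subring.sum_mem _ (fun k _ =>
      Subring.mul_mem _ (hA.2 i k) (hB.2 k j))
  exact this

lemma mul_mem_closure_slSet (hN : 2 ≤ N) {A B : Matrix (Fin g) (Fin g) ℝ}
    (hA : A ∈ closure (slSet g N)) (hB : B ∈ closure (slSet g N)) :
    A * B ∈ closure (slSet g N) := by
  refine map_mem_closure₂ ?_ hA hB (fun a ha b hb => mul_mem_slSet hN ha hb)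
  exact continuous_fst.matrix_mul continuous_snd

lemma transvection_mem_closure (hN : 2 ≤ N) {i j : Fin g} (hij : i ≠ j) (c : ℝ) :
    Matrix.transvection i j c ∈ closure (slSet g N) := by
  have hcont : Continuous (fun t : ℝ => Matrix.transvection i j t) := by
    apply continuous_matrix
    intro a b
    by_cases h : i = a ∧ j = b
    · simp only [Matrix.transvection, Matrix.add_apply, Matrix.single,
        Matrix.of_apply, if_pos h]
      fun_prop
    · simp only [Matrix.transvection, Matrix.add_apply, Matrix.single,
        Matrix.of_apply, if_neg h]
      fun_prop
  refine map_mem_closure hcont (dense_zInvN N hN c) ?_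
  rintro t ⟨m, k, rfl⟩
  refine ⟨Matrix.det_transvection_of_ne i j hij _, fun a b => ?_⟩
  by_cases h : i = a ∧ j = b
  · obtain ⟨h1, h2⟩ := h
    subst h1; subst h2
    exact ⟨m, k, by simp [Matrix.transvection, Matrix.single, Matrix.one_apply, hij]⟩
  · by_cases hab : a = b
    · refine ⟨1, 0, ?_⟩
      simp [Matrix.transvection, Matrix.single, Matrix.one_apply, hab, h]
      intro h1 h2
      exact absurd (h1.trans h2.symm) hij
    · exact ⟨0, 0, by simp [Matrix.transvection, Matrix.single, Matrix.one_apply, hab, h]⟩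

end SL

set_option maxHeartbeats 1000000 in
set_option maxRecDepth 8000 in
lemma six_transvections {g N : ℕ} (hN : 2 ≤ N) (i j : Fin g) (hij : i ≠ j) (a : ℝ) (ha : a ≠ 0) :
    transvection i j a * transvection j i (-a⁻¹) * transvection i j a *
      (transvection i j (-1) * transvection j i 1 * transvection i j (-1)) =
    diagonal (fun l => if l = i then a else if l = j then a⁻¹ else 1) := by
  have hji : j ≠ i := hij.symm
  have hRHS : diagonal (fun l => if l = i then a else if l = j then a⁻¹ else 1)
      = 1 + Matrix.single i i (a - 1) + Matrix.single j j (a⁻¹ - 1) := by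
    ext x y
    simp only [Matrix.diagonal_apply, Matrix.add_apply, Matrix.one_apply,
      Matrix.single, Matrix.of_apply]
    by_cases h1 : i = x <;> by_cases h2 : j = x <;> by_cases h3 : i = y <;>
      by_cases h4 : j = y <;> by_cases h5 : x = y <;> simp_all [eq_comm] <;> ring
  obtain ⟨E, hE⟩ : ∃ E : Fin g → Fin g → Matrix (Fin g) (Fin g) ℝ,
      E = fun x y => Matrix.single x y 1 := ⟨_, rfl⟩
  have hsm : ∀ (x y : Fin g) (c : ℝ), Matrix.single x y c = c • E x y := by
    intro x y c
    rw [hE]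
    ext x' y'
    simp [Matrix.single, mul_ite]
  rw [hRHS]
  simp only [Matrix.transvection]
  simp only [Matrix.mul_add, Matrix.add_mul, Matrix.one_mul, Matrix.mul_one,
    Matrix.single_mul_single_same, Matrix.single_mul_single_of_ne, hij, hji,
    ne_eq, not_false_iff, Matrix.zero_mul, Matrix.mul_zero, add_zero, zero_add]
  simp only [hsm]
  match_scalars <;> (try field_simp) <;> ring

lemma diag_pair_mem_closure {g N : ℕ} (hN : 2 ≤ N) {i j : Fin g} (hij : i ≠ j)
    {a : ℝ} (ha : a ≠ 0) :
    diagonal (fun l => if l = i then a else if l = j then a⁻¹ else 1)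
      ∈ closure (slSet g N) := by
  rw [← six_transvections hN i j hij a ha]
  exact mul_mem_closure_slSet hN
    (mul_mem_closure_slSet hN
      (mul_mem_closure_slSet hN (transvection_mem_closure hN hij a)
        (transvection_mem_closure hN hij.symm _))
      (transvection_mem_closure hN hij a))
    (mul_mem_closure_slSet hN
      (mul_mem_closure_slSet hN (transvection_mem_closure hN hij _)
        (transvection_mem_closure hN hij.symm _))
      (transvection_mem_closure hN hij _))

lemma prod_pair_inv {g : ℕ} {a b : Fin g} (hab : a ≠ b) {v : ℝ} (hv : v ≠ 0) :
    (∏ l, (if l = a then v else if l = b then v⁻¹ else 1)) = 1 := by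
  rw [← Finset.mul_prod_erase Finset.univ _ (Finset.mem_univ a),
    ← Finset.mul_prod_erase _ _ (Finset.mem_erase.2 ⟨hab.symm, Finset.mem_univ b⟩)]
  rw [if_pos rfl, if_neg hab.symm, if_pos rfl]
  rw [Finset.prod_eq_one, mul_one, mul_inv_cancel₀ hv]
  intro l hl
  simp only [Finset.mem_erase] at hl
  rw [if_neg hl.2.1, if_neg hl.1]

lemma diagonal_mem_closure {g N : ℕ} (hN : 2 ≤ N) (hg : 1 ≤ g) {d : Fin g → ℝ}
    (hd : ∏ i, d i = 1) : diagonal d ∈ closure (slSet g N) := by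
  suffices H : ∀ (n : ℕ), 1 ≤ n → ∀ d : Fin g → ℝ, (∏ i, d i = 1) →
      (∀ i : Fin g, n ≤ i.val → d i = 1) → diagonal d ∈ closure (slSet g N) by
    exact H g hg d hd (fun i hi => absurd i.isLt (not_lt.2 hi))
  intro n hn
  induction n with
  | zero => omega
  | succ k IH =>
    intro d hd hd1
    rcases Nat.eq_or_lt_of_le hn with h1 | h1
    · -- k + 1 = 1, i.e. k = 0 : d is identically 1
      have hk : k = 0 := by omega
      subst hk
      have hd0 : ∀ i : Fin g, i ≠ ⟨0, hg⟩ → d i = 1 := by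
        intro i hi
        apply hd1
        have : i.val ≠ 0 := fun h => hi (Fin.ext h)
        omega
      have : d ⟨0, hg⟩ = 1 := by
        rwa [Finset.prod_eq_single_of_mem ⟨0, hg⟩ (Finset.mem_univ _)
          (fun i _ hi => hd0 i hi)] at hd
      have hdall : d = fun _ => 1 := by
        funext i
        by_cases hi : i = ⟨0, hg⟩
        · rw [hi]; exact this
        · exact hd0 i hi
      rw [hdall, diagonal_one]
      exact subset_closure (one_mem_slSet hN)
    · -- 1 ≤ k
      have hk1 : 1 ≤ k := by omega
      by_cases hkg : g ≤ k
      · exact IH hk1 d hd (fun i hi => absurd (hi.trans_lt i.isLt) (not_lt.2 hkg))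
      · push_neg at hkg
        set a : Fin g := ⟨k - 1, by omega⟩ with ha_def
        set b : Fin g := ⟨k, hkg⟩ with hb_def
        have hab : a ≠ b := by
          intro h
          have := congrArg Fin.val h
          simp only [ha_def, hb_def] at this
          omega
        have hdne : ∀ i, d i ≠ 0 := by
          intro i hi0
          rw [Finset.prod_eq_zero (Finset.mem_univ i) hi0] at hd
          exact one_ne_zero hd.symm
        have hdb : d b ≠ 0 := hdne b
        set d' : Fin g → ℝ := fun l => if l = a then d a * d b else if l = b then 1 else d l
          with hd'_def
        set e : Fin g → ℝ := fun l => if l = b then d b else if l = a then (d b)⁻¹ else 1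
          with he_def
        have hde : ∀ l, d' l * e l = d l := by
          intro l
          simp only [hd'_def, he_def]
          by_cases h1 : l = a
          · subst h1
            rw [if_pos rfl, if_neg hab, if_pos rfl]
            field_simp
          · by_cases h2 : l = b
            · subst h2
              rw [if_neg h1, if_pos rfl, if_pos rfl, one_mul]
            · rw [if_neg h1, if_neg h2, if_neg h2, if_neg h1, mul_one]
        have hd'prod : ∏ i, d' i = 1 := by
          have hc : ∀ l, d' l = d l * (if l = a then d b else if l = b then (d b)⁻¹ else 1) := by
            intro l
            simp only [hd'_def]
            by_cases h1 : l = a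
            · subst h1
              rw [if_pos rfl, if_pos rfl]
            · by_cases h2 : l = b
              · subst h2
                rw [if_neg h1, if_pos rfl, if_neg h1, if_pos rfl, mul_inv_cancel₀ hdb]
              · rw [if_neg h1, if_neg h2, if_neg h1, if_neg h2, mul_one]
          calc ∏ i, d' i
              = ∏ i, d i * (if i = a then d b else if i = b then (d b)⁻¹ else 1) := by
                exact Finset.prod_congr rfl (fun i _ => hc i)
            _ = (∏ i, d i) * ∏ i, (if i = a then d b else if i = b then (d b)⁻¹ else 1) :=
                Finset.prod_mul_distrib
            _ = 1 := by rw [hd, prod_pair_inv hab hdb, one_mul]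
        have hd'1 : ∀ i : Fin g, k ≤ i.val → d' i = 1 := by
          intro i hi
          simp only [hd'_def]
          by_cases h2 : i = b
          · subst h2
            rw [if_neg (Ne.symm hab), if_pos rfl]
          · have hia : i ≠ a := by
              intro h
              have := congrArg Fin.val h
              simp only [ha_def] at this
              omega
            have : k + 1 ≤ i.val := by
              rcases Nat.eq_or_lt_of_le hi with h | h
              · exact absurd (Fin.ext h.symm) h2
              · omega
            rw [if_neg hia, if_neg h2]
            exact hd1 i this
        have key : diagonal d = diagonal d' *
            diagonal (fun l => if l = b then d b else if l = a then (d b)⁻¹ else 1) := by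
          rw [diagonal_mul_diagonal]
          exact congrArg _ (funext fun l => (hde l).symm)
        rw [key]
        exact mul_mem_closure_slSet hN (IH hk1 d' hd'prod hd'1)
          (diag_pair_mem_closure hN hab.symm hdb)

lemma prod_transvec_mem_closure {g N : ℕ} (hN : 2 ≤ N)
    (L : List (TransvectionStruct (Fin g) ℝ)) :
    (L.map TransvectionStruct.toMatrix).prod ∈ closure (slSet g N) := by
  induction L with
  | nil => exact subset_closure (one_mem_slSet hN)
  | cons t L IH =>
    rw [List.map_cons, List.prod_cons]
    refine mul_mem_closure_slSet hN ?_ IH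
    obtain ⟨i, j, hij, c⟩ := t
    rw [Matrix.TransvectionStruct.toMatrix_mk]
    exact transvection_mem_closure hN hij c

lemma det_one_mem_closure {g N : ℕ} (hN : 2 ≤ N) (hg : 1 ≤ g)
    {M : Matrix (Fin g) (Fin g) ℝ} (hM : M.det = 1) : M ∈ closure (slSet g N) := by
  obtain ⟨L, L', D, rfl⟩ := Matrix.Pivot.exists_list_transvec_mul_diagonal_mul_list_transvec M
  have hD : ∏ i, D i = 1 := by
    have := hM
    rw [det_mul, det_mul, Matrix.TransvectionStruct.det_toMatrix_prod,
      Matrix.TransvectionStruct.det_toMatrix_prod, one_mul, mul_one, det_diagonal] at this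
    exact this
  exact mul_mem_closure_slSet hN
    (mul_mem_closure_slSet hN (prod_transvec_mem_closure hN L)
      (diagonal_mem_closure hN hg hD))
    (prod_transvec_mem_closure hN L')

/-- The set of matrices `r • (G * Gᵀ)` with `r > 0` and `G ∈ SL_g(ℤ[1/N])` is dense in
the set of real symmetric positive definite `g × g` matrices. -/
theorem rGGt_dense_in_posdef (g N : ℕ) (hg : 1 ≤ g) (hN : 2 ≤ N) :
    {A : Matrix (Fin g) (Fin g) ℝ | A.IsSymm ∧ A.PosDef} ⊆
      closure {B : Matrix (Fin g) (Fin g) ℝ |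
        ∃ (r : ℝ) (G : Matrix (Fin g) (Fin g) ℝ), 0 < r ∧ G.det = 1 ∧
          (∀ i j, ∃ (m : ℤ) (k : ℕ), G i j = (m : ℝ) / (N : ℝ) ^ k) ∧
          B = r • (G * Gᵀ)} := by
  rintro A ⟨hsymm, hpd⟩
  obtain ⟨C, hCps, hCC⟩ : ∃ C : Matrix (Fin g) (Fin g) ℝ, C.PosSemidef ∧ C * C = A := by
    open scoped MatrixOrder in
    exact ⟨CFC.sqrt A, (CFC.sqrt_nonneg A).posSemidef,
      CFC.sqrt_mul_sqrt_self A hpd.posSemidef.nonneg⟩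
  have hCt : Cᵀ = C := hCps.1
  have hdetA : 0 < A.det := hpd.det_pos
  have hdetCsq : C.det * C.det = A.det := by rw [← det_mul, hCC]
  have hdetCnn : 0 ≤ C.det := by
    rw [hCps.1.det_eq_prod_eigenvalues]
    exact Finset.prod_nonneg (fun i _ => hCps.eigenvalues_nonneg i)
  have hdetC : 0 < C.det := by
    rcases hdetCnn.lt_or_eq with h | h
    · exact h
    · exfalso; rw [← h, mul_zero] at hdetCsq; exact (hdetCsq ▸ hdetA).false
  have hgR : (g : ℝ) ≠ 0 := by positivity
  set c : ℝ := C.det ^ ((g : ℝ)⁻¹) with hc_def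
  have hc : 0 < c := Real.rpow_pos_of_pos hdetC _
  have hcg : c ^ g = C.det := by
    rw [hc_def, ← Real.rpow_natCast (C.det ^ ((g:ℝ)⁻¹)) g, ← Real.rpow_mul hdetC.le,
      inv_mul_cancel₀ hgR, Real.rpow_one]
  set G₀ : Matrix (Fin g) (Fin g) ℝ := c⁻¹ • C with hG₀_def
  have hdetG₀ : G₀.det = 1 := by
    rw [hG₀_def, det_smul, Fintype.card_fin, inv_pow, hcg,
      inv_mul_cancel₀ (hcg ▸ (pow_pos hc g)).ne']
  have hG₀mem : G₀ ∈ closure (slSet g N) := det_one_mem_closure hN hg hdetG₀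
  have hA : (c ^ 2) • (G₀ * G₀ᵀ) = A := by
    rw [hG₀_def, transpose_smul, hCt, smul_mul_assoc, mul_smul_comm, hCC,
      smul_smul, smul_smul]
    have hsc : c ^ 2 * c⁻¹ * c⁻¹ = 1 := by field_simp
    rw [hsc, one_smul]
  rw [← hA]
  refine map_mem_closure (f := fun G : Matrix (Fin g) (Fin g) ℝ => (c ^ 2) • (G * Gᵀ))
    ?_ hG₀mem ?_
  · exact Continuous.const_smul (g := fun G : Matrix (Fin g) (Fin g) ℝ => G * Gᵀ)
      (continuous_id.matrix_mul continuous_id.matrix_transpose) (c ^ 2)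
  · rintro G ⟨hGdet, hGent⟩
    exact ⟨c ^ 2, G, pow_pos hc 2, hGdet, hGent, rfl⟩
end

section
/- Fix an integer g ≥ 1 and a real number t. Then the set of g × g real matrices Q that are symmetric, positive semidefinite, half-integral, and satisfy tr(Q) ≤ t, is finite. -/
open Matrix

lemma psd_quad_aux {g : ℕ} (Q : Matrix (Fin g) (Fin g) ℝ) (hQ : Q.PosSemidef) (i j : Fin g)
    (c : ℝ) :
    0 ≤ Q i i + c * Q i j + c * Q j i + c * c * Q j j := by
  have h := hQ.dotProduct_mulVec_nonneg (Pi.single i 1 + Pi.single j c)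
  rcases eq_or_ne i j with rfl | hij
  · have h0 := hQ.dotProduct_mulVec_nonneg (Pi.single i 1)
    simp only [dotProduct, mulVec, Pi.single_apply, star_trivial, mul_ite, ite_mul,
      mul_one, one_mul, mul_zero, zero_mul, Finset.sum_ite_eq', Finset.mem_univ,
      if_pos] at h0
    nlinarith [h0, sq_nonneg (1 + c)]
  · simpa [dotProduct, mulVec, Pi.single_apply, mul_add, add_mul, Finset.sum_add_distrib,
      Finset.mul_sum, mul_ite, ite_mul, Finset.sum_ite_eq', hij, hij.symm, mul_comm,
      mul_left_comm, add_assoc, add_comm, add_left_comm] using h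

/-- There are finitely many symmetric, positive semidefinite, half-integral `g × g`
matrices with trace at most `t`. -/
theorem finite_halfintegral_psd_bounded_trace (g : ℕ) (hg : 1 ≤ g) (t : ℝ) :
    {Q : Matrix (Fin g) (Fin g) ℝ | Q.IsSymm ∧ Q.PosSemidef ∧
      (∀ i j, ∃ m : ℤ, 2 * Q i j = (m : ℝ)) ∧ (∀ i, ∃ m : ℤ, Q i i = (m : ℝ)) ∧
      Q.trace ≤ t}.Finite := by
  set S := {Q : Matrix (Fin g) (Fin g) ℝ | Q.IsSymm ∧ Q.PosSemidef ∧
      (∀ i j, ∃ m : ℤ, 2 * Q i j = (m : ℝ)) ∧ (∀ i, ∃ m : ℤ, Q i i = (m : ℝ)) ∧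
      Q.trace ≤ t} with hS
  set N : ℤ := ⌈2 * t⌉ with hN
  -- the encoding map
  set F : Matrix (Fin g) (Fin g) ℝ → (Fin g → Fin g → ℤ) := fun Q i j => ⌊2 * Q i j⌋ with hF
  -- key bounds
  have key : ∀ Q ∈ S, ∀ i j, |2 * Q i j| ≤ 2 * t := by
    intro Q hQ i j
    obtain ⟨hsym, hpsd, hhalf, hint, htr⟩ := hQ
    have hdiag : ∀ k, 0 ≤ Q k k := by
      intro k
      have := psd_quad_aux Q hpsd k k 0
      simpa using this
    have hkt : ∀ k, Q k k ≤ t := by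
      intro k
      have hle : Q k k ≤ Q.trace := by
        rw [Matrix.trace]
        exact Finset.single_le_sum (fun l _ => hdiag l) (Finset.mem_univ k)
      linarith
    rcases eq_or_ne i j with rfl | hij
    · rw [abs_le]
      constructor
      · nlinarith [hdiag i, hkt i]
      · nlinarith [hkt i]
    · have hsum : Q i i + Q j j ≤ Q.trace := by
        rw [Matrix.trace]
        have := Finset.add_sum_erase Finset.univ (fun k => Q.diag k) (Finset.mem_univ i)
        calc Q i i + Q j j ≤ Q i i + ∑ k ∈ Finset.univ.erase i, Q.diag k := by
              have hj : j ∈ Finset.univ.erase i := Finset.mem_erase.mpr ⟨hij.symm, Finset.mem_univ j⟩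
              have := Finset.single_le_sum (f := fun k => Q.diag k)
                (fun l _ => hdiag l) hj
              simpa [Matrix.diag] using add_le_add_right this (Q i i)
          _ = ∑ k, Q.diag k := this
      have hji : Q j i = Q i j := by
        have := hsym
        rw [Matrix.IsSymm] at this
        calc Q j i = Qᵀ i j := rfl
          _ = Q i j := by rw [this]
      have h1 := psd_quad_aux Q hpsd i j 1
      have h2 := psd_quad_aux Q hpsd i j (-1)
      rw [abs_le]
      constructor
      · nlinarith
      · nlinarith
  -- injectivity of F on S
  have hinj : Set.InjOn F S := by
    intro Q hQ Q' hQ' hFQ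
    ext i j
    obtain ⟨m, hm⟩ := hQ.2.2.1 i j
    obtain ⟨m', hm'⟩ := hQ'.2.2.1 i j
    have h1 : ⌊2 * Q i j⌋ = m := by rw [hm]; exact Int.floor_intCast m
    have h2 : ⌊2 * Q' i j⌋ = m' := by rw [hm']; exact Int.floor_intCast m'
    have : ⌊2 * Q i j⌋ = ⌊2 * Q' i j⌋ := congrFun (congrFun hFQ i) j
    have hmm : m = m' := by rw [← h1, ← h2]; exact this
    have hmm' : (m : ℝ) = m' := by exact_mod_cast hmm
    linarith
  -- the image is finite
  have himg : (F '' S).Finite := by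
    apply Set.Finite.subset (Set.Finite.pi (fun i => Set.Finite.pi
      (fun j => Set.finite_Icc (-N) N)))
    rintro f ⟨Q, hQ, rfl⟩
    intro i _
    intro j _
    obtain ⟨m, hm⟩ := hQ.2.2.1 i j
    have hb := key Q hQ i j
    have hfm : F Q i j = m := by simp only [hF]; rw [hm]; exact Int.floor_intCast m
    rw [hm] at hb
    have h1 : (m : ℝ) ≤ 2 * t := (abs_le.mp hb).2
    have h2 : -(2 * t) ≤ (m : ℝ) := (abs_le.mp hb).1
    have hmN : m ≤ N := by
      have : (m : ℝ) ≤ (⌈2 * t⌉ : ℝ) := h1.trans (Int.le_ceil _)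
      exact_mod_cast this
    have hNm : -N ≤ m := by
      have h3 : (2 : ℝ) * t ≤ N := by exact_mod_cast Int.le_ceil (2 * t)
      have : ((-N : ℤ) : ℝ) ≤ (m : ℝ) := by push_cast; linarith
      exact_mod_cast this
    rw [hfm]
    exact Set.mem_Icc.mpr ⟨hNm, hmN⟩
  exact Set.Finite.of_finite_image himg hinj
end

section
/- Let g ≥ 1 be an integer, let T be a finite set of g × g real symmetric positive semidefinite matrices, and let ε > 0 be a real number. Then there exists a g × g real symmetric positive definite matrix E such that tr(E·Q₁) ≠ tr(E·Q₂) for all Q₁, Q₂ ∈ T with Q₁ ≠ Q₂, and tr(E·Q) < ε for all Q ∈ T. -/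
open Matrix Polynomial

namespace SepTraceAux

/-- Exponent assignment: symmetric in `i, j`, positive, and determines the unordered
pair `{i, j}`. -/
def expo (g : ℕ) (i j : Fin g) : ℕ := 1 + (min i.val j.val + g * max i.val j.val)

lemma expo_comm (g : ℕ) (i j : Fin g) : expo g i j = expo g j i := by
  simp [expo, min_comm, max_comm]

lemma one_le_expo (g : ℕ) (i j : Fin g) : 1 ≤ expo g i j := by simp [expo]

lemma expo_eq_iff {g : ℕ} (i j a b : Fin g) :
    expo g a b = expo g i j ↔ (a = i ∧ b = j) ∨ (a = j ∧ b = i) := by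
  constructor
  · intro h
    have ha := a.isLt; have hb := b.isLt; have hi := i.isLt; have hj := j.isLt
    have hmab : min a.val b.val < g := by omega
    have hmij : min i.val j.val < g := by omega
    unfold expo at h
    have h' : min a.val b.val + g * max a.val b.val
        = min i.val j.val + g * max i.val j.val := by omega
    have hmod : min a.val b.val = min i.val j.val := by
      have := congrArg (· % g) h'
      simpa [Nat.add_mul_mod_self_left, Nat.mod_eq_of_lt hmab, Nat.mod_eq_of_lt hmij] using this
    have hgpos : 0 < g := by omega
    have hmax : max a.val b.val = max i.val j.val := by
      have h'' : g * max a.val b.val = g * max i.val j.val := by omega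
      exact Nat.eq_of_mul_eq_mul_left hgpos h''
    have : (a.val = i.val ∧ b.val = j.val) ∨ (a.val = j.val ∧ b.val = i.val) := by omega
    rcases this with ⟨h1, h2⟩ | ⟨h1, h2⟩
    · exact Or.inl ⟨Fin.ext h1, Fin.ext h2⟩
    · exact Or.inr ⟨Fin.ext h1, Fin.ext h2⟩
  · rintro (⟨rfl, rfl⟩ | ⟨rfl, rfl⟩)
    · rfl
    · exact expo_comm g a b

/-- The polynomial attached to a matrix `Q`: its evaluation at `t` equals
`tr ((1 + (t^expo)) * Q)` when `Q` is symmetric. -/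
noncomputable def qp (g : ℕ) (Q : Matrix (Fin g) (Fin g) ℝ) : Polynomial ℝ :=
  C Q.trace + ∑ i : Fin g, ∑ j : Fin g, C (Q i j) * X ^ expo g i j

lemma qp_coeff (g : ℕ) (Q : Matrix (Fin g) (Fin g) ℝ) (i j : Fin g) :
    (qp g Q).coeff (expo g i j) = if i = j then Q i j else Q i j + Q j i := by
  have h0 : (C Q.trace).coeff (expo g i j) = 0 := by
    rw [coeff_C, if_neg]
    have := one_le_expo g i j; omega
  have hsum : (∑ a : Fin g, ∑ b : Fin g, C (Q a b) * X ^ expo g a b).coeff (expo g i j)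
      = ∑ a : Fin g, ∑ b : Fin g, if expo g a b = expo g i j then Q a b else 0 := by
    rw [Polynomial.finset_sum_coeff]
    refine Finset.sum_congr rfl fun a _ => ?_
    rw [Polynomial.finset_sum_coeff]
    refine Finset.sum_congr rfl fun b _ => ?_
    rw [coeff_C_mul, coeff_X_pow]
    rcases eq_or_ne (expo g a b) (expo g i j) with h | h
    · simp [h]
    · simp [h, Ne.symm h]
  rw [qp, coeff_add, h0, zero_add, hsum]
  rw [← Finset.sum_product']
  rw [← Finset.sum_filter]
  by_cases hij : i = j
  · subst hij
    have : Finset.filter (fun p : Fin g × Fin g => expo g p.1 p.2 = expo g i i)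
        (Finset.univ ×ˢ Finset.univ) = {(i, i)} := by
      ext p
      simp only [Finset.mem_filter, Finset.mem_product, Finset.mem_univ, true_and,
        Finset.mem_singleton, expo_eq_iff, Prod.ext_iff]
      tauto
    rw [this]
    simp
  · have : Finset.filter (fun p : Fin g × Fin g => expo g p.1 p.2 = expo g i j)
        (Finset.univ ×ˢ Finset.univ) = {(i, j), (j, i)} := by
      ext p
      simp only [Finset.mem_filter, Finset.mem_product, Finset.mem_univ, true_and,
        Finset.mem_insert, Finset.mem_singleton, expo_eq_iff, Prod.ext_iff]
    rw [this]
    rw [Finset.sum_insert (by simp [Prod.ext_iff]; intro h; exact (hij h).elim)]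
    simp [hij]

lemma qp_injOn {g : ℕ} {Q₁ Q₂ : Matrix (Fin g) (Fin g) ℝ}
    (h1 : Q₁.IsSymm) (h2 : Q₂.IsSymm) (h : qp g Q₁ = qp g Q₂) : Q₁ = Q₂ := by
  ext i j
  have hc := congrArg (fun p => p.coeff (expo g i j)) h
  simp only [qp_coeff] at hc
  by_cases hij : i = j
  · simpa [hij] using hc
  · rw [if_neg hij, if_neg hij, h1.apply i j, h2.apply i j] at hc
    linarith

lemma eval_qp {g : ℕ} (Q : Matrix (Fin g) (Fin g) ℝ) (hQ : Q.IsSymm) (t : ℝ) :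
    (qp g Q).eval t
      = (((1 : Matrix (Fin g) (Fin g) ℝ) + Matrix.of fun i j => t ^ expo g i j) * Q).trace := by
  rw [Matrix.add_mul, Matrix.one_mul, Matrix.trace_add]
  have htr : ((Matrix.of fun i j => t ^ expo g i j : Matrix (Fin g) (Fin g) ℝ) * Q).trace
      = ∑ i : Fin g, ∑ j : Fin g, t ^ expo g i j * Q j i := by
    simp [Matrix.trace, Matrix.mul_apply, Matrix.diag]
  rw [htr, qp]
  simp only [eval_add, eval_C, eval_finset_sum, eval_mul, eval_pow, eval_X]
  congr 1
  refine Finset.sum_congr rfl fun i _ => Finset.sum_congr rfl fun j _ => ?_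
  rw [hQ.apply i j, mul_comm]

lemma posdef_one_add {g : ℕ} (t : ℝ) (ht0 : 0 < t) (ht1 : t ≤ 1) (htg : t * g < 1) :
    ((1 : Matrix (Fin g) (Fin g) ℝ) + Matrix.of fun i j => t ^ expo g i j).PosDef := by
  have hsymm : ((1 : Matrix (Fin g) (Fin g) ℝ) + Matrix.of fun i j => t ^ expo g i j).IsSymm := by
    ext i j
    simp only [Matrix.transpose_apply, Matrix.add_apply, Matrix.one_apply, Matrix.of_apply]
    rw [expo_comm]
    congr 1
    simp [eq_comm]
  rw [Matrix.posDef_iff_dotProduct_mulVec]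
  constructor
  · exact Matrix.ext fun i j => by
      rw [Matrix.conjTranspose_apply, star_trivial]
      exact hsymm.apply i j
  · intro x hx
    have hS : 0 < ∑ i : Fin g, x i ^ 2 := by
      obtain ⟨i, hi⟩ := Function.ne_iff.mp hx
      have hi' : x i ≠ 0 := by simpa using hi
      exact Finset.sum_pos' (fun j _ => sq_nonneg _)
        ⟨i, Finset.mem_univ i, sq_pos_of_ne_zero hi'⟩
    set S : ℝ := ∑ i : Fin g, x i ^ 2 with hSdef
    have hdp : star x ⬝ᵥ (((1 : Matrix (Fin g) (Fin g) ℝ)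
          + Matrix.of fun i j => t ^ expo g i j) *ᵥ x)
        = S + ∑ i : Fin g, ∑ j : Fin g, x i * (t ^ expo g i j * x j) := by
      rw [star_trivial, Matrix.add_mulVec, dotProduct_add, Matrix.one_mulVec]
      congr 1
      · simp [dotProduct, hSdef, sq]
      · simp [dotProduct, Matrix.mulVec, Finset.mul_sum]
    rw [hdp]
    have hterm : ∀ i j : Fin g, -(t * (x i ^ 2 + x j ^ 2) / 2)
        ≤ x i * (t ^ expo g i j * x j) := by
      intro i j
      have he : t ^ expo g i j ≤ t := by
        calc t ^ expo g i j ≤ t ^ 1 := pow_le_pow_of_le_one ht0.le ht1 (one_le_expo g i j)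
        _ = t := pow_one t
      have he0 : 0 ≤ t ^ expo g i j := pow_nonneg ht0.le _
      have habs : |x i * (t ^ expo g i j * x j)| ≤ t * (x i ^ 2 + x j ^ 2) / 2 := by
        rw [abs_mul, abs_mul, abs_of_nonneg he0]
        nlinarith [abs_nonneg (x i), abs_nonneg (x j), sq_abs (x i), sq_abs (x j),
          sq_nonneg (|x i| - |x j|), mul_nonneg (abs_nonneg (x i)) (abs_nonneg (x j))]
      linarith [neg_abs_le (x i * (t ^ expo g i j * x j))]
    have hlow : -(t * g * S) ≤ ∑ i : Fin g, ∑ j : Fin g, x i * (t ^ expo g i j * x j) := by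
      have h1 : ∑ i : Fin g, ∑ j : Fin g, -(t * (x i ^ 2 + x j ^ 2) / 2)
          ≤ ∑ i : Fin g, ∑ j : Fin g, x i * (t ^ expo g i j * x j) :=
        Finset.sum_le_sum fun i _ => Finset.sum_le_sum fun j _ => hterm i j
      have h2 : ∑ i : Fin g, ∑ j : Fin g, -(t * (x i ^ 2 + x j ^ 2) / 2) = -(t * g * S) := by
        have hinner : ∀ i : Fin g, ∑ j : Fin g, -(t * (x i ^ 2 + x j ^ 2) / 2)
            = -(t * ((g : ℝ) * x i ^ 2 + S) / 2) := by
          intro i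
          rw [Finset.sum_neg_distrib, neg_inj]
          rw [← Finset.sum_div, ← Finset.mul_sum, Finset.sum_add_distrib,
            Finset.sum_const, Finset.card_univ, Fintype.card_fin, nsmul_eq_mul]
        calc ∑ i : Fin g, ∑ j : Fin g, -(t * (x i ^ 2 + x j ^ 2) / 2)
            = ∑ i : Fin g, -(t * ((g : ℝ) * x i ^ 2 + S) / 2) :=
              Finset.sum_congr rfl fun i _ => hinner i
          _ = -(t * ((g : ℝ) * S + (g : ℝ) * S) / 2) := by
              rw [Finset.sum_neg_distrib, neg_inj]
              rw [← Finset.sum_div, ← Finset.mul_sum, Finset.sum_add_distrib,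
                ← Finset.mul_sum, Finset.sum_const, Finset.card_univ, Fintype.card_fin,
                nsmul_eq_mul, ← hSdef]
          _ = -(t * g * S) := by ring
      linarith
    nlinarith [mul_pos ht0 hS]

end SepTraceAux

open SepTraceAux

/-- Given a finite set `T` of real symmetric positive semidefinite matrices and `ε > 0`,
there is a real symmetric positive definite matrix `E` such that the traces `tr(E·Q)` for
`Q ∈ T` are pairwise distinct and all less than `ε`. -/
theorem exists_posdef_separating_traces (g : ℕ) (hg : 1 ≤ g)
    (T : Finset (Matrix (Fin g) (Fin g) ℝ))
    (hsym : ∀ Q ∈ T, Q.IsSymm) (hpsd : ∀ Q ∈ T, Q.PosSemidef)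
    (ε : ℝ) (hε : 0 < ε) :
    ∃ E : Matrix (Fin g) (Fin g) ℝ, E.IsSymm ∧ E.PosDef ∧
      (∀ Q₁ ∈ T, ∀ Q₂ ∈ T, Q₁ ≠ Q₂ → (E * Q₁).trace ≠ (E * Q₂).trace) ∧
      (∀ Q ∈ T, (E * Q).trace < ε) := by
  have hgpos : (0 : ℝ) < g := by exact_mod_cast hg
  set c : ℝ := min 1 (1 / (2 * (g : ℝ))) with hc
  have hc0 : 0 < c := lt_min one_pos (by positivity)
  -- the "bad" set of parameters where some pair of traces collide
  set Bad : Set ℝ := ⋃ P ∈ (T ×ˢ T).filter (fun P => P.1 ≠ P.2),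
    {x : ℝ | (qp g P.1 - qp g P.2).IsRoot x} with hBad
  have hBadFin : Bad.Finite := by
    refine Set.Finite.biUnion (Finset.finite_toSet _) fun P hP => ?_
    rw [Finset.mem_coe, Finset.mem_filter, Finset.mem_product] at hP
    refine Polynomial.finite_setOf_isRoot (sub_ne_zero.mpr fun h => hP.2 ?_)
    exact qp_injOn (hsym _ hP.1.1) (hsym _ hP.1.2) h
  obtain ⟨t, ht⟩ : ((Set.Ioo (0 : ℝ) c) \ Bad).Nonempty :=
    ((Set.Ioo_infinite hc0).diff hBadFin).nonempty
  obtain ⟨⟨ht0, htc⟩, htBad⟩ := ht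
  have ht1 : t ≤ 1 := (lt_of_lt_of_le htc (min_le_left _ _)).le
  have htg : t * g < 1 := by
    have h2 : t < 1 / (2 * (g : ℝ)) := lt_of_lt_of_le htc (min_le_right _ _)
    have h3 : t * (2 * (g : ℝ)) < 1 := (lt_div_iff₀ (by positivity)).mp h2
    nlinarith [mul_pos ht0 hgpos]
  set E₀ : Matrix (Fin g) (Fin g) ℝ :=
    (1 : Matrix (Fin g) (Fin g) ℝ) + Matrix.of fun i j => t ^ expo g i j with hE₀
  have hE₀pd : E₀.PosDef := posdef_one_add t ht0 ht1 htg
  have hE₀symm : E₀.IsSymm := by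
    have h := hE₀pd.isHermitian
    exact Matrix.ext fun i j => by
      have := congrFun (congrFun h i) j
      rw [Matrix.conjTranspose_apply, star_trivial] at this
      rw [Matrix.transpose_apply]
      exact this
  -- choose the scaling factor
  set S : ℝ := ∑ Q ∈ T, |(E₀ * Q).trace| with hSdef
  have hS0 : 0 ≤ S := Finset.sum_nonneg fun Q _ => abs_nonneg _
  set δ : ℝ := ε / (1 + S) with hδdef
  have hδ : 0 < δ := div_pos hε (by linarith)
  refine ⟨δ • E₀, ?_, ?_, ?_, ?_⟩
  · rw [Matrix.IsSymm, Matrix.transpose_smul, hE₀symm]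
  · rw [Matrix.posDef_iff_dotProduct_mulVec]
    constructor
    · show (δ • E₀)ᴴ = δ • E₀
      rw [Matrix.conjTranspose_smul, star_trivial, hE₀pd.isHermitian]
    · intro x hx
      rw [smul_mulVec, dotProduct_smul, smul_eq_mul]
      exact mul_pos hδ (hE₀pd.dotProduct_mulVec_pos hx)
  · intro Q₁ hQ₁ Q₂ hQ₂ hne
    have h1 : ((δ • E₀) * Q₁).trace = δ * (qp g Q₁).eval t := by
      rw [smul_mul_assoc, Matrix.trace_smul, smul_eq_mul, eval_qp Q₁ (hsym _ hQ₁) t]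
    have h2 : ((δ • E₀) * Q₂).trace = δ * (qp g Q₂).eval t := by
      rw [smul_mul_assoc, Matrix.trace_smul, smul_eq_mul, eval_qp Q₂ (hsym _ hQ₂) t]
    rw [h1, h2]
    intro h
    have hev : (qp g Q₁).eval t = (qp g Q₂).eval t := mul_left_cancel₀ (ne_of_gt hδ) h
    apply htBad
    rw [hBad]
    refine Set.mem_biUnion (show (Q₁, Q₂) ∈ (T ×ˢ T).filter (fun P => P.1 ≠ P.2) from ?_) ?_
    · rw [Finset.mem_filter, Finset.mem_product]
      exact ⟨⟨hQ₁, hQ₂⟩, hne⟩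
    · show (qp g Q₁ - qp g Q₂).IsRoot t
      rw [Polynomial.IsRoot, Polynomial.eval_sub, hev, sub_self]
  · intro Q hQ
    have h1 : ((δ • E₀) * Q).trace = δ * (E₀ * Q).trace := by
      rw [smul_mul_assoc, Matrix.trace_smul, smul_eq_mul]
    have hvS : |(E₀ * Q).trace| ≤ S :=
      Finset.single_le_sum (f := fun Q => |(E₀ * Q).trace|) (fun Q _ => abs_nonneg _) hQ
    have hfin : δ * (1 + S) = ε := div_mul_cancel₀ ε (by linarith)
    calc ((δ • E₀) * Q).trace = δ * (E₀ * Q).trace := h1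
      _ ≤ δ * |(E₀ * Q).trace| := mul_le_mul_of_nonneg_left (le_abs_self _) hδ.le
      _ ≤ δ * S := mul_le_mul_of_nonneg_left hvS hδ.le
      _ < δ * (1 + S) := (mul_lt_mul_iff_right₀ hδ).mpr (by linarith)
      _ = ε := hfin
end
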